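/- Let ξ be a locally finite Borel measure on ℝ^d whose support has convex hull equal to all of ℝ^d. Let N := {i ∈ ℤ^d : ξ(i + [0,1)^d) > 0}, and partition ℤ^d into Voronoi cells by assigning each i ∈ ℤ^d to the point of N closest to i (choosing the lexicographically lowest point in case of ties). Then every Voronoi cell contains only finitely many points of ℤ^d. -/

import Mathlib

open MeasureTheory ENNReal Set

namespace LT

/-- Points of `ℝ^d`. -/
abbrev Rd (d : ℕ) := Fin d → ℝ

/-- Points of `ℤ^d`. -/
abbrev ZZd (d : ℕ) := Fin d → ℤ

/-- The shift `θ_t ξ`, satisfying `θ_t ξ (B) = ξ (B + t)`. -/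
noncomputable def shiftM {d : ℕ} (t : Rd d) (ξ : Measure (Rd d)) : Measure (Rd d) :=
  Measure.map (fun x => x - t) ξ

/-- A (jointly) measurable action of the additive group `ℝ^d` on a measurable space `E`,
written `θ_t x = act t x`. -/
structure Action (d : ℕ) (E : Type*) [MeasurableSpace E] where
  act : Rd d → E → E
  measurable_act : ∀ t, Measurable (act t)
  act_zero : ∀ x, act 0 x = x
  act_add : ∀ s t x, act s (act t x) = act (s + t) x

/-- The conditional (normalized) measure `ξ(· | A)`. -/
noncomputable def condM {d : ℕ} (ξ : Measure (Rd d)) (A : Set (Rd d)) : Measure (Rd d) :=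
  (ξ A)⁻¹ • ξ.restrict A

/-- `0` lies in the support of `ξ`. -/
def zeroInSupport {d : ℕ} (ξ : Measure (Rd d)) : Prop :=
  ∀ U : Set (Rd d), IsOpen U → (0 : Rd d) ∈ U → 0 < ξ U

variable {d : ℕ} {Ω E : Type*} [MeasurableSpace Ω] [MeasurableSpace E]

/-- The defining identity (1) of mass-stationarity for a fixed set `C` :
`(θ_{V_C}(X,ξ), V_C + U_C) =_D ((X,ξ), U_C)`, where the conditional distribution of `U_C`
given `(X,ξ)` is uniform on `C` and that of `V_C` given `((X,ξ),U_C)` is `ξ(· | C - U_C)`. -/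
def MSIdentity (Θ : Action d E) (P : Measure Ω) (X : Ω → E) (ξ : Ω → Measure (Rd d))
    (C : Set (Rd d)) : Prop :=
  ∀ f : (E × Measure (Rd d)) × Rd d → ℝ≥0∞, Measurable f →
    ∫⁻ ω, (volume C)⁻¹ * ∫⁻ u in C,
        ∫⁻ v, f ((Θ.act v (X ω), shiftM v (ξ ω)), v + u)
          ∂(condM (ξ ω) ((· + u) ⁻¹' C)) ∂volume ∂P
    = ∫⁻ ω, (volume C)⁻¹ * ∫⁻ u in C, f ((X ω, ξ ω), u) ∂volume ∂P

/-- Mass-stationarity of `(X, ξ)` under `P`. -/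
def IsMassStationary (Θ : Action d E) (P : Measure Ω) (X : Ω → E)
    (ξ : Ω → Measure (Rd d)) : Prop :=
  ∀ C : Set (Rd d), MeasurableSet C → Bornology.IsBounded C → 0 < volume C →
    volume (frontier C) = 0 → MSIdentity Θ P X ξ C

/-- Stationarity of the pair `(X, ξ)` under `P`. -/
def IsStationary (Θ : Action d E) (P : Measure Ω) (X : Ω → E)
    (ξ : Ω → Measure (Rd d)) : Prop :=
  ∀ t : Rd d, Measure.map (fun ω => (Θ.act t (X ω), shiftM t (ξ ω))) P
    = Measure.map (fun ω => (X ω, ξ ω)) P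

/-- Stationarity of a random element `X` under `P`. -/
def IsStationaryElem (Θ : Action d E) (P : Measure Ω) (X : Ω → E) : Prop :=
  ∀ t : Rd d, Measure.map (fun ω => Θ.act t (X ω)) P = Measure.map X P

/-- `(Xc, ξc)` under `Pc` is the Palm version of the (stationary) pair `(X, ξ)` under `P`. -/
def IsPalmVersion {Ω' : Type*} [MeasurableSpace Ω']
    (Θ : Action d E) (Pc : Measure Ω) (Xc : Ω → E) (ξc : Ω → Measure (Rd d))
    (P : Measure Ω') (X : Ω' → E) (ξ : Ω' → Measure (Rd d)) : Prop :=
  ∀ f : E × Measure (Rd d) → ℝ≥0∞, Measurable f →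
    ∀ B : Set (Rd d), MeasurableSet B → 0 < volume B → volume B < ⊤ →
      ∫⁻ ω, f (Xc ω, ξc ω) ∂Pc
        = (volume B)⁻¹ * ∫⁻ ω, ∫⁻ t in B, f (Θ.act t (X ω), shiftM t (ξ ω)) ∂(ξ ω) ∂P

end LT
namespace LT

/-- Lexicographic order on `ℤ^d` (with the index order of `Fin d`). -/
def lexLE {d : ℕ} (a b : ZZd d) : Prop :=
  a = b ∨ ∃ k : Fin d, a k < b k ∧ ∀ l, l < k → a l = b l

/-- The half-open unit cube `i + [0,1)^d` based at `i ∈ ℤ^d`. -/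
def cube {d : ℕ} (i : ZZd d) : Set (Rd d) :=
  {x | ∀ k, (i k : ℝ) ≤ x k ∧ x k < (i k : ℝ) + 1}

/-- The half-open box `[0,n)^d`. -/
def boxN (d n : ℕ) : Set (Rd d) := {x | ∀ k, 0 ≤ x k ∧ x k < (n : ℝ)}

/-- The half-open unit box `[0,1)^d`. -/
def box01 (d : ℕ) : Set (Rd d) := boxN d 1

/-- The simple point process on `ℤ^d` having a point at `i` iff `ξ(i + [0,1)^d) > 0`. -/
def Npts {d : ℕ} (ξ : Measure (Rd d)) : Set (ZZd d) := {i | 0 < ξ (cube i)}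

/-- Squared Euclidean distance on `ℤ^d`. -/
def sqdist {d : ℕ} (i j : ZZd d) : ℤ := ∑ k, (i k - j k) ^ 2

open Classical in
/-- The point of `N ⊆ ℤ^d` closest to `i`, the lexicographically lowest one in case of
ties (junk value `i` if no such point exists, e.g. if `N = ∅`). -/
noncomputable def voronoiCenter {d : ℕ} (N : Set (ZZd d)) (i : ZZd d) : ZZd d :=
  if h : ∃ j, j ∈ N ∧ (∀ j' ∈ N, sqdist i j ≤ sqdist i j') ∧
      (∀ j' ∈ N, sqdist i j' = sqdist i j → lexLE j j') then h.choose else i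

/-- The Voronoi cell (w.r.t. `N`) containing the origin of `ℤ^d`: the set `D`. -/
def Dcell {d : ℕ} (N : Set (ZZd d)) : Set (ZZd d) :=
  {i | voronoiCenter N i = voronoiCenter N 0}

/-- The vector `S = S_0` from the `N`-point of the cell of `0` to `0`. -/
noncomputable def Svec {d : ℕ} (N : Set (ZZd d)) : ZZd d := -(voronoiCenter N 0)

/-- The set `D° = S + D`. -/
noncomputable def Dc {d : ℕ} (N : Set (ZZd d)) : Set (ZZd d) :=
  (fun i => Svec N + i) '' Dcell N

/-- Embedding `ℤ^d → ℝ^d`. -/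
def toRd {d : ℕ} (i : ZZd d) : Rd d := fun k => (i k : ℝ)

/-- The support of a measure on `ℝ^d`. -/
def msupport {d : ℕ} (ξ : Measure (Rd d)) : Set (Rd d) :=
  {x | ∀ U : Set (Rd d), IsOpen U → x ∈ U → 0 < ξ U}

end LT
namespace LT

def dotR {d : ℕ} (v : ZZd d) (x : Rd d) : ℝ := ∑ k, (v k : ℝ) * x k

lemma exists_finset_dot {d : ℕ} (S : Set (Rd d)) (c : Rd d) (hc : c ∈ convexHull ℝ S) :
    ∃ F : Finset (Rd d), ↑F ⊆ S ∧ ∀ v : ZZd d, ∃ p ∈ F, dotR v c ≤ dotR v p := by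
  rw [convexHull_eq] at hc
  obtain ⟨ι, t, w, z, hw0, hw1, hzS, hcm⟩ := hc
  refine ⟨t.image z, ?_, ?_⟩
  · intro p hp
    simp only [Finset.coe_image, Set.mem_image, Finset.mem_coe] at hp
    obtain ⟨m, hm, rfl⟩ := hp
    exact hzS m hm
  · intro v
    have hc' : c = ∑ m ∈ t, w m • z m := by
      rw [← hcm, Finset.centerMass_eq_of_sum_1 _ _ hw1]
    have hlin : dotR v c = ∑ m ∈ t, w m * dotR v (z m) := by
      rw [hc']
      simp only [dotR, Finset.sum_apply, Pi.smul_apply, smul_eq_mul, Finset.mul_sum]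
      rw [Finset.sum_comm]
      apply Finset.sum_congr rfl; intro m _
      apply Finset.sum_congr rfl; intro k _; ring
    by_contra h
    push_neg at h
    have h' : ∀ m ∈ t, dotR v (z m) < dotR v c := by
      intro m hm
      exact h (z m) (Finset.mem_image_of_mem z hm)
    obtain ⟨m₀, hm₀, hw₀⟩ := Finset.exists_ne_zero_of_sum_ne_zero (by rw [hw1]; norm_num :
      ∑ m ∈ t, w m ≠ 0)
    have hw₀' : 0 < w m₀ := lt_of_le_of_ne (hw0 m₀ hm₀) (Ne.symm hw₀)
    have : ∑ m ∈ t, w m * dotR v (z m) < ∑ m ∈ t, w m * dotR v c := by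
      apply Finset.sum_lt_sum
      · intro m hm
        exact mul_le_mul_of_nonneg_left (le_of_lt (h' m hm)) (hw0 m hm)
      · exact ⟨m₀, hm₀, mul_lt_mul_of_pos_left (h' m₀ hm₀) hw₀'⟩
    rw [← Finset.sum_mul, hw1, one_mul, ← hlin] at this
    exact lt_irrefl _ this

lemma support_near {d : ℕ} (ξm : Measure (Rd d)) {x : Rd d} (hx : x ∈ msupport ξm) :
    ∃ q : ZZd d, q ∈ Npts ξm ∧ ∀ k, |(q k : ℝ) - x k| ≤ 2 := by
  classical
  set U : Set (Rd d) := Set.pi Set.univ (fun k => Set.Ioo (x k - 1) (x k + 1)) with hU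
  have hUopen : IsOpen U := isOpen_set_pi Set.finite_univ (fun k _ => isOpen_Ioo)
  have hxU : x ∈ U := by
    intro k _
    constructor <;> simp
  have hpos : 0 < ξm U := hx U hUopen hxU
  set I : Finset (ZZd d) :=
    Fintype.piFinset (fun k => Finset.Icc (⌊x k⌋ - 1) (⌊x k⌋ + 1)) with hI
  have hcover : U ⊆ ⋃ q ∈ I, cube q := by
    intro y hy
    have hq1 : (fun k => ⌊y k⌋) ∈ I := by
      rw [hI, Fintype.mem_piFinset]
      intro k
      have h1 := (hy k (Set.mem_univ k)).1
      have h2 := (hy k (Set.mem_univ k)).2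
      have hf1 := Int.floor_le (y k)
      have hf2 := Int.lt_floor_add_one (y k)
      have hg1 := Int.floor_le (x k)
      have hg2 := Int.lt_floor_add_one (x k)
      have hlow : (⌊x k⌋ : ℝ) - 1 < (⌊y k⌋ : ℝ) + 1 := by linarith
      have hlow' : ⌊x k⌋ - 1 < ⌊y k⌋ + 1 := by exact_mod_cast hlow
      have hhigh : (⌊y k⌋ : ℝ) < (⌊x k⌋ : ℝ) + 2 := by linarith
      have hhigh' : ⌊y k⌋ < ⌊x k⌋ + 2 := by exact_mod_cast hhigh
      rw [Finset.mem_Icc]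
      omega
    have hq2 : y ∈ cube (fun k => ⌊y k⌋) := by
      intro k
      exact ⟨Int.floor_le (y k), Int.lt_floor_add_one (y k)⟩
    exact Set.mem_biUnion hq1 hq2
  have hle : ξm U ≤ ∑ q ∈ I, ξm (cube q) :=
    le_trans (measure_mono hcover) (measure_biUnion_finset_le I cube)
  have : ∃ q ∈ I, 0 < ξm (cube q) := by
    by_contra h
    push_neg at h
    have : ∑ q ∈ I, ξm (cube q) = 0 := Finset.sum_eq_zero (fun q hq => le_antisymm (h q hq) zero_le)
    rw [this] at hle
    exact absurd (le_antisymm hle zero_le) (ne_of_gt hpos)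
  obtain ⟨q, hqI, hq⟩ := this
  refine ⟨q, hq, ?_⟩
  intro k
  rw [hI, Fintype.mem_piFinset] at hqI
  have := hqI k
  rw [Finset.mem_Icc] at this
  have h1 : (⌊x k⌋ : ℝ) - 1 ≤ (q k : ℝ) := by exact_mod_cast this.1
  have h2 : (q k : ℝ) ≤ (⌊x k⌋ : ℝ) + 1 := by exact_mod_cast this.2
  have h3 := Int.floor_le (x k)
  have h4 := Int.lt_floor_add_one (x k)
  rw [abs_le]
  constructor <;> linarith
lemma center_min {d : ℕ} {N : Set (ZZd d)} {i j : ZZd d} (h : voronoiCenter N i = j) :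
    i = j ∨ (∀ q ∈ N, sqdist i j ≤ sqdist i q) := by
  unfold voronoiCenter at h
  split at h
  · right
    rename_i he
    obtain ⟨h1, h2, h3⟩ := he.choose_spec
    rw [← h]
    exact h2
  · left; exact h

lemma sqdist_nonneg {d : ℕ} (i j : ZZd d) : 0 ≤ sqdist i j :=
  Finset.sum_nonneg fun k _ => sq_nonneg _


/-- If `ξ` is a locally finite Borel measure on `ℝ^d` whose support has convex hull all of
`ℝ^d`, then every Voronoi cell of the point process
`N = {i ∈ ℤ^d : ξ(i + [0,1)^d) > 0}` (with the nearest-point, lex-lowest-tie-break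
assignment) contains only finitely many points of `ℤ^d`. -/
theorem voronoi_cells_finite {d : ℕ} (ξm : Measure (Rd d)) [IsLocallyFiniteMeasure ξm]
    (hconv : convexHull ℝ (msupport ξm) = Set.univ) :
    ∀ j : ZZd d, {i : ZZd d | voronoiCenter (Npts ξm) i = j}.Finite := by
  classical
  intro j
  -- target points j ± (2d+1) e_k
  set cpt : Fin d × Bool → Rd d := fun kb l =>
    (j l : ℝ) + if l = kb.1 then (if kb.2 then (2 * d + 1 : ℝ) else -(2 * d + 1)) else 0
    with hcpt
  have hhull : ∀ c : Rd d, c ∈ convexHull ℝ (msupport ξm) := by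
    rw [hconv]; exact fun c => Set.mem_univ c
  choose F hFsub hFdot using fun kb : Fin d × Bool =>
    exists_finset_dot (msupport ξm) (cpt kb) (hhull _)
  choose g hgN hgclose using fun (x : Rd d) (hx : x ∈ msupport ξm) => support_near ξm hx
  set G : Finset (ZZd d) :=
    Finset.univ.biUnion (fun kb : Fin d × Bool =>
      (F kb).attach.image (fun p => g p.1 (hFsub kb p.2))) with hG
  obtain ⟨B, hBspec⟩ : ∃ B : ℕ, ∀ q' ∈ G, sqdist q' j ≤ (B : ℤ) :=
    ⟨G.sup fun q' => (sqdist q' j).toNat, fun q' hq' => by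
      have h11 : (sqdist q' j).toNat ≤ G.sup fun q'' => (sqdist q'' j).toNat := by
        exact Finset.le_sup (f := fun q'' => (sqdist q'' j).toNat) hq'
      omega⟩
  have key : ∀ i : ZZd d, voronoiCenter (Npts ξm) i = j → ∀ l, |i l - j l| ≤ (B : ℤ) := by
    intro i hi l
    rcases center_min hi with rfl | hmin
    · simp
    set v : ZZd d := fun l => i l - j l with hv
    by_cases hv0 : ∀ l, v l = 0
    · have h0 : i l - j l = 0 := hv0 l
      rw [h0]; positivity
    push_neg at hv0
    obtain ⟨k₀, hk₀⟩ := hv0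
    obtain ⟨k, -, hk⟩ := Finset.exists_max_image Finset.univ (fun l => |v l|) ⟨k₀, Finset.mem_univ k₀⟩
    have hkmax : ∀ l, |v l| ≤ |v k| := fun l => hk l (Finset.mem_univ l)
    have hk1 : 1 ≤ |v k| := le_trans (Int.one_le_abs hk₀) (hkmax k₀)
    set bb : Bool := decide (0 < v k) with hbb
    -- dot of v with target point
    have hdc : dotR v (cpt (k, bb)) = dotR v (toRd j) + (2 * d + 1 : ℝ) * |(v k : ℤ)| := by
      have hterm : ∀ l ∈ Finset.univ, (v l : ℝ) * cpt (k, bb) l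
          = (v l : ℝ) * (j l : ℝ)
            + (if l = k then (v l : ℝ) * (if bb then (2 * d + 1 : ℝ) else -(2 * d + 1)) else 0) := by
        intro l _
        rw [hcpt]
        by_cases h : l = k <;> by_cases h2 : bb <;> simp [h, h2] <;> ring
      have hsum : dotR v (cpt (k, bb)) = dotR v (toRd j)
          + (v k : ℝ) * (if bb then (2 * d + 1 : ℝ) else -(2 * d + 1)) := by
        rw [dotR, Finset.sum_congr rfl hterm, Finset.sum_add_distrib,
          Finset.sum_ite_eq' Finset.univ k]
        simp [dotR, toRd]
      rw [hsum]
      congr 1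
      by_cases hb : 0 < v k
      · have hbt : bb = true := by rw [hbb]; exact decide_eq_true hb
        rw [hbt, if_pos rfl]
        push_cast [abs_of_pos hb]
        ring
      · have hbf : bb = false := by rw [hbb]; simp [hb]
        rw [hbf, if_neg Bool.false_ne_true]
        push_cast [abs_of_nonpos (le_of_not_gt hb)]
        ring
    obtain ⟨p, hpF, hdot⟩ := hFdot (k, bb) v
    have hpS : p ∈ msupport ξm := hFsub (k, bb) hpF
    set q : ZZd d := g p hpS with hq
    have hqN : q ∈ Npts ξm := hgN p hpS
    have hqG : q ∈ G := by
      rw [hG]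
      apply Finset.mem_biUnion.2
      refine ⟨(k, bb), Finset.mem_univ _, ?_⟩
      apply Finset.mem_image.2
      exact ⟨⟨p, hpF⟩, Finset.mem_attach _ _, rfl⟩
    have hclose : ∀ l, |(q l : ℝ) - p l| ≤ 2 := hgclose p hpS
    have habs : ∀ l, |((v l : ℤ) : ℝ)| ≤ ((|v k| : ℤ) : ℝ) := fun l => by
      exact_mod_cast hkmax l
    have hA0 : (0:ℝ) ≤ ((|v k| : ℤ) : ℝ) := by positivity
    have hA1 : (1:ℝ) ≤ ((|v k| : ℤ) : ℝ) := by exact_mod_cast hk1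
    -- dotR v (toRd q) ≥ dotR v p - 2 * ∑ |v l|
    have h5 : dotR v p - ∑ l, |((v l : ℤ) : ℝ)| * 2 ≤ dotR v (toRd q) := by
      have hterm2 : ∀ l ∈ Finset.univ,
          (v l : ℝ) * p l - |((v l : ℤ) : ℝ)| * 2 ≤ (v l : ℝ) * toRd q l := by
        intro l _
        have h1 : |(v l : ℝ) * ((q l : ℝ) - p l)| ≤ |((v l : ℤ) : ℝ)| * 2 := by
          rw [abs_mul]
          exact mul_le_mul_of_nonneg_left (hclose l) (abs_nonneg _)
        have h2 := neg_abs_le ((v l : ℝ) * ((q l : ℝ) - p l))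
        have h3 : (v l : ℝ) * toRd q l = (v l : ℝ) * p l + (v l : ℝ) * ((q l : ℝ) - p l) := by
          simp only [toRd]; ring
        rw [h3]
        linarith
      calc dotR v p - ∑ l, |((v l : ℤ) : ℝ)| * 2
          = ∑ l, ((v l : ℝ) * p l - |((v l : ℤ) : ℝ)| * 2) := by
            rw [Finset.sum_sub_distrib]; rfl
        _ ≤ ∑ l, (v l : ℝ) * toRd q l := Finset.sum_le_sum hterm2
        _ = dotR v (toRd q) := rfl
    have h6 : ∑ l, |((v l : ℤ) : ℝ)| * 2 ≤ 2 * d * ((|v k| : ℤ) : ℝ) := by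
      calc ∑ l, |((v l : ℤ) : ℝ)| * 2
          ≤ ∑ _l : Fin d, ((|v k| : ℤ) : ℝ) * 2 :=
            Finset.sum_le_sum (fun l _ => by have := habs l; linarith)
        _ = d * (((|v k| : ℤ) : ℝ) * 2) := by rw [Finset.sum_const]; simp [Finset.card_univ]
        _ = 2 * d * ((|v k| : ℤ) : ℝ) := by ring
    -- combine: dotR v (toRd q) - dotR v (toRd j) ≥ |v k|
    have h7 : dotR v (toRd j) + ((|v k| : ℤ) : ℝ) ≤ dotR v (toRd q) := by
      have h4 := hdot
      rw [hdc] at h4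
      linarith
    -- integer dot
    set dz : ℤ := ∑ l, v l * (q l - j l) with hdz
    have h8 : |v k| ≤ dz := by
      have hr : dotR v (toRd q) - dotR v (toRd j) = (dz : ℝ) := by
        rw [dotR, dotR, hdz, ← Finset.sum_sub_distrib]
        push_cast
        apply Finset.sum_congr rfl
        intro l _
        simp only [toRd]
        ring
      have hle2 : ((|v k| : ℤ) : ℝ) ≤ (dz : ℝ) := by linarith
      exact_mod_cast hle2
    -- Voronoi inequality
    have h9 : 2 * dz ≤ sqdist q j := by
      have hm := hmin q hqN
      have hid : sqdist i q - sqdist i j = sqdist q j - 2 * dz := by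
        rw [sqdist, sqdist, sqdist, hdz, ← Finset.sum_sub_distrib, Finset.mul_sum,
          ← Finset.sum_sub_distrib]
        apply Finset.sum_congr rfl
        intro l _
        simp only [hv]
        ring
      omega
    have h10 : sqdist q j ≤ (B : ℤ) := hBspec q hqG
    have h12 : |i l - j l| ≤ |v k| := hkmax l
    have h13 : (0:ℤ) ≤ |i l - j l| := abs_nonneg _
    linarith
  apply Set.Finite.subset (Set.Finite.pi (fun l => Set.finite_Icc (j l - B) (j l + B)))
  intro i hi
  rw [Set.mem_pi]
  intro l _
  rw [Set.mem_Icc]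
  have := key i hi l
  rw [abs_le] at this
  omega


end LT
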